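/- Fix an integer n ≥ 1 and let (c_m)_{m≥0} be the associated recursively defined sequence. Let Y ∈ ℝ⟦z⟧ be the formal power series Y := Σ_{j≥0} ((−1)^j c_j / (2n+1)^j) · z^{j+1}. Then Y^{2n+1} + Y^{2n+2} = z^{2n+1} as formal power series in ℝ⟦z⟧. -/

import Mathlib

open Finset PowerSeries

lemma coeff_pow_tuple {R : Type*} [CommSemiring R] (φ : PowerSeries R) (k m : ℕ) :
    PowerSeries.coeff m (φ ^ k)
      = ∑ ℓ ∈ Finset.Nat.antidiagonalTuple k m, ∏ i, PowerSeries.coeff (ℓ i) φ := by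
  induction k generalizing m with
  | zero =>
    cases m with
    | zero => simp
    | succ m => simp
  | succ k ih =>
    rw [pow_succ', PowerSeries.coeff_mul]
    simp_rw [ih, Finset.mul_sum]
    rw [Finset.sum_sigma']
    refine Finset.sum_bij' (fun x _ => Fin.cons x.1.1 x.2)
      (fun y _ => ⟨(y 0, ∑ i : Fin k, y i.succ), Fin.tail y⟩) ?_ ?_ ?_ ?_ ?_
    · rintro ⟨⟨a, b⟩, ℓ⟩ hx
      simp only [Finset.mem_sigma, Finset.HasAntidiagonal.mem_antidiagonal,
        Finset.Nat.mem_antidiagonalTuple] at hx ⊢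
      rw [Fin.sum_cons, hx.2, hx.1]
    · intro y hy
      rw [Finset.Nat.mem_antidiagonalTuple] at hy
      simp only [Finset.mem_sigma, Finset.HasAntidiagonal.mem_antidiagonal,
        Finset.Nat.mem_antidiagonalTuple]
      exact ⟨by rw [← hy, Fin.sum_univ_succ], rfl⟩
    · rintro ⟨⟨a, b⟩, ℓ⟩ hx
      simp only [Finset.mem_sigma, Finset.mem_antidiagonal,
        Finset.Nat.mem_antidiagonalTuple] at hx
      simp only [Fin.cons_zero, Fin.tail_cons]
      have hb : ∑ i : Fin k, (Fin.cons a ℓ : Fin (k+1) → ℕ) i.succ = b := by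
        simp only [Fin.cons_succ]; exact hx.2
      simp only [Fin.cons_succ]
      congr 1
      rw [hx.2]
    · intro y hy
      exact Fin.cons_self_tail y
    · rintro ⟨⟨a, b⟩, ℓ⟩ hx
      simp [Fin.prod_univ_succ, Fin.cons_zero, Fin.cons_succ]

open Finset

lemma key_sum (n : ℕ) (c : ℕ → ℚ) (hc0 : c 0 = 1)
    (hcrec : ∀ m : ℕ, 1 ≤ m →
      c m = (∑ ℓ ∈ Finset.Nat.antidiagonalTuple (2 * n + 2) (m - 1), ∏ i, c (ℓ i))
        - 1 / (2 * (n : ℚ) + 1) *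
          ∑ j ∈ (Finset.Nat.antidiagonalTuple (2 * n + 1) m).filter
              (fun j => ∀ i, j i ≤ m - 1), ∏ i, c (j i))
    (m : ℕ) (hm : 1 ≤ m) :
    ∑ ℓ ∈ Finset.Nat.antidiagonalTuple (2 * n + 1) m, ∏ i, c (ℓ i)
      = (2 * (n : ℚ) + 1) * ∑ ℓ ∈ Finset.Nat.antidiagonalTuple (2 * n + 2) (m - 1), ∏ i, c (ℓ i) := by
  have h2n1 : (2 * (n : ℚ) + 1) ≠ 0 := by positivity
  set k := 2 * n + 1 with hk
  -- the complement of the filter consists of the tuples `Pi.single i m`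
  have hcompl : (Finset.Nat.antidiagonalTuple k m).filter
      (fun j => ¬ ∀ i, j i ≤ m - 1)
      = Finset.image (fun i : Fin k => Pi.single i m) Finset.univ := by
    ext ℓ
    simp only [Finset.mem_filter, Finset.Nat.mem_antidiagonalTuple, Finset.mem_image,
      Finset.mem_univ, true_and, not_forall]
    constructor
    · rintro ⟨hsum, i, hi⟩
      have him : m ≤ ℓ i := by omega
      have hle : ℓ i ≤ m := by
        rw [← hsum]
        exact Finset.single_le_sum (f := ℓ) (fun _ _ => Nat.zero_le _) (Finset.mem_univ i)
      have him' : ℓ i = m := le_antisymm hle him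
      have hrest : ∑ j ∈ Finset.univ.erase i, ℓ j = 0 := by
        have := Finset.add_sum_erase Finset.univ ℓ (Finset.mem_univ i)
        omega
      refine ⟨i, funext fun j => ?_⟩
      by_cases hji : j = i
      · subst hji; rw [Pi.single_eq_same, him']
      · rw [Pi.single_eq_of_ne hji]
        exact ((Finset.sum_eq_zero_iff).mp hrest j
          (Finset.mem_erase.mpr ⟨hji, Finset.mem_univ j⟩)).symm
    · rintro ⟨i, rfl⟩
      constructor
      · simp [Finset.sum_pi_single']
      · exact ⟨i, by simp; omega⟩
  have hinj : ∀ i ∈ (Finset.univ : Finset (Fin k)), ∀ j ∈ Finset.univ,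
      (fun i : Fin k => (Pi.single i m : Fin k → ℕ)) i = (fun i : Fin k => (Pi.single i m : Fin k → ℕ)) j → i = j := by
    intro i _ j _ h
    by_contra hij
    have := congrFun h i
    simp only [] at this
    rw [Pi.single_eq_same, Pi.single_eq_of_ne hij] at this
    omega
  have hprod : ∀ i : Fin k, ∏ j, c ((Pi.single i m : Fin k → ℕ) j) = c m := by
    intro i
    rw [Finset.prod_eq_single i (fun j _ hj => by rw [Pi.single_eq_of_ne hj, hc0])
      (fun h => absurd (Finset.mem_univ i) h)]
    rw [Pi.single_eq_same]
  have hcomplsum : ∑ ℓ ∈ (Finset.Nat.antidiagonalTuple k m).filter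
      (fun j => ¬ ∀ i, j i ≤ m - 1), ∏ i, c (ℓ i) = (2 * (n : ℚ) + 1) * c m := by
    rw [hcompl, Finset.sum_image hinj]
    simp only [hprod]
    rw [Finset.sum_const, Finset.card_univ, Fintype.card_fin, nsmul_eq_mul, hk]
    push_cast
    ring
  have hsplit := Finset.sum_filter_add_sum_filter_not (Finset.Nat.antidiagonalTuple k m)
    (fun j => ∀ i, j i ≤ m - 1) (fun ℓ => ∏ i, c (ℓ i))
  have hrec := hcrec m hm
  rw [← hsplit, hcomplsum]
  have hfilter : ∑ j ∈ (Finset.Nat.antidiagonalTuple k m).filter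
      (fun j => ∀ i, j i ≤ m - 1), ∏ i, c (j i)
      = (2 * (n : ℚ) + 1) * ((∑ ℓ ∈ Finset.Nat.antidiagonalTuple (2 * n + 2) (m - 1), ∏ i, c (ℓ i)) - c m) := by
    rw [hrec]
    field_simp
    ring
  rw [hfilter]
  ring

open Finset PowerSeries

theorem statement3 (n : ℕ) (hn : 1 ≤ n) (c : ℕ → ℚ)
    (hc0 : c 0 = 1)
    (hcrec : ∀ m : ℕ, 1 ≤ m →
      c m = (∑ ℓ ∈ Finset.Nat.antidiagonalTuple (2 * n + 2) (m - 1), ∏ i, c (ℓ i))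
        - 1 / (2 * (n : ℚ) + 1) *
          ∑ j ∈ (Finset.Nat.antidiagonalTuple (2 * n + 1) m).filter
              (fun j => ∀ i, j i ≤ m - 1), ∏ i, c (j i))
    (Y : PowerSeries ℝ)
    (hY : Y = PowerSeries.mk fun j =>
      if j = 0 then 0
      else (-1 : ℝ) ^ (j - 1) * (c (j - 1) : ℝ) / (2 * (n : ℝ) + 1) ^ (j - 1)) :
    Y ^ (2 * n + 1) + Y ^ (2 * n + 2) = (PowerSeries.X : PowerSeries ℝ) ^ (2 * n + 1) := by
  have hr : (2 * (n : ℝ) + 1) ≠ 0 := by positivity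
  set r : ℝ := 2 * (n : ℝ) + 1 with hrdef
  set A : PowerSeries ℝ := PowerSeries.mk (fun j => (-1 / r) ^ j * (c j : ℝ)) with hA
  have hYA : Y = PowerSeries.X * A := by
    rw [hY]
    ext k
    cases k with
    | zero => simp [PowerSeries.coeff_zero_X_mul, hA]
    | succ k =>
      rw [PowerSeries.coeff_succ_X_mul, hA, PowerSeries.coeff_mk, PowerSeries.coeff_mk]
      simp only [Nat.succ_ne_zero, if_false, Nat.add_sub_cancel]
      rw [div_pow]
      ring
  -- coefficient of A^k at m
  have hcoeffA : ∀ k m : ℕ, PowerSeries.coeff m (A ^ k)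
      = (-1 / r) ^ m * ((∑ ℓ ∈ Finset.Nat.antidiagonalTuple k m, ∏ i, c (ℓ i) : ℚ) : ℝ) := by
    intro k m
    rw [coeff_pow_tuple]
    push_cast
    rw [Finset.mul_sum]
    refine Finset.sum_congr rfl fun ℓ hℓ => ?_
    rw [Finset.Nat.mem_antidiagonalTuple] at hℓ
    simp only [hA, PowerSeries.coeff_mk]
    rw [Finset.prod_mul_distrib, Finset.prod_pow_eq_pow_sum, hℓ]
  have hkey : A ^ (2 * n + 1) + PowerSeries.X * A ^ (2 * n + 2) = 1 := by
    ext m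
    cases m with
    | zero =>
      rw [map_add, PowerSeries.coeff_zero_X_mul, hcoeffA]
      simp [Finset.Nat.antidiagonalTuple_zero_right, hc0]
    | succ m =>
      rw [map_add, PowerSeries.coeff_succ_X_mul, hcoeffA, hcoeffA]
      have hQ := key_sum n c hc0 hcrec (m + 1) (Nat.le_add_left 1 m)
      rw [Nat.add_sub_cancel] at hQ
      rw [hQ]
      have h1 : PowerSeries.coeff (m + 1) (1 : PowerSeries ℝ) = 0 := by
        rw [PowerSeries.coeff_one]
        simp
      rw [h1]
      push_cast
      rw [pow_succ]
      field_simp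
      ring
  rw [hYA, mul_pow, mul_pow]
  calc PowerSeries.X ^ (2 * n + 1) * A ^ (2 * n + 1)
        + PowerSeries.X ^ (2 * n + 2) * A ^ (2 * n + 2)
      = PowerSeries.X ^ (2 * n + 1) * (A ^ (2 * n + 1) + PowerSeries.X * A ^ (2 * n + 2)) := by
        ring
    _ = PowerSeries.X ^ (2 * n + 1) := by rw [hkey, mul_one]
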